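/- The sequence of values of the Möbius function μ(n) is not eventually periodic. -/

import Mathlib

open ArithmeticFunction
open scoped ArithmeticFunction.Moebius

theorem stmt_6 :
    ¬ ∃ M k, 1 ≤ k ∧ ∀ n, M ≤ n →
      ArithmeticFunction.moebius (n + k) = ArithmeticFunction.moebius n := by
  rintro ⟨M, k, hk, hper⟩
  have key : ∀ j n, M ≤ n → μ (n + j * k) = μ n := by
    intro j
    induction j with
    | zero => simp
    | succ j ih =>
      intro n hn
      have : n + (j + 1) * k = (n + j * k) + k := by ring
      rw [this, hper _ (le_trans hn (Nat.le_add_right _ _)), ih n hn]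
  obtain ⟨p, hp, hpM, hpmod⟩ := Nat.exists_prime_gt_modEq_one (k := k) M (by omega)
  obtain ⟨q, hq, hqp, hqmod⟩ := Nat.exists_prime_gt_modEq_one (k := k) p (by omega)
  -- q^2 ≡ 1 ≡ p [MOD k], q^2 ≥ p
  have hq2mod : q ^ 2 ≡ p [MOD k] := by
    calc q ^ 2 = q * q := sq q
    _ ≡ 1 * 1 [MOD k] := Nat.ModEq.mul hqmod hqmod
    _ = 1 := by ring
    _ ≡ p [MOD k] := hpmod.symm
  have hple : p ≤ q ^ 2 := le_trans hqp.le (Nat.le_self_pow two_ne_zero q)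
  obtain ⟨j, hj⟩ : ∃ j, q ^ 2 = p + j * k := by
    have hd : k ∣ q ^ 2 - p := (Nat.modEq_iff_dvd' hple).mp hq2mod.symm
    obtain ⟨j, hj⟩ := hd
    exact ⟨j, by rw [Nat.mul_comm j k]; omega⟩
  have h1 : μ (q ^ 2) = μ p := by rw [hj]; exact key j p hpM.le
  rw [moebius_apply_prime hp, moebius_apply_prime_pow hq two_ne_zero] at h1
  simp at h1
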